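/- Let s1, t1, S1, h be rational numbers such that 2h + 3(s1+t1)(t1−S1) ≠ 0, and define s2 = [h^2 + (s1^2 + (3t1−2S1)s1 + 3t1^2 − 3t1·S1 + S1^2)h + (s1+t1)(t1−S1)(s1^2 + (t1−S1)s1 + t1^2 − t1·S1 + S1^2)] / (2h + 3(s1+t1)(t1−S1)) and t2 = [−h^2 + (s1^2 + s1·S1 + S1^2)h + (s1+t1)(t1−S1)(s1^2 + (t1−S1)s1 + t1^2 − t1·S1 + S1^2)] / (2h + 3(s1+t1)(t1−S1)). Then s2^2 − t2^2 − (s1^2 + s1·S1 + S1^2)·s2 + (s1^2 − 2s1·S1 + S1^2 + 3s1·t1 − 3t1·S1 + 3t1^2)·t2 + (s1+t1)(S1−t1)(s1^2 − s1·S1 + S1^2 + s1·t1 − t1·S1 + t1^2) = 0. -/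

import Mathlib

theorem stmt_3 (s₁ t₁ S₁ h s₂ t₂ : ℚ)
    (hden : 2 * h + 3 * (s₁ + t₁) * (t₁ - S₁) ≠ 0)
    (hs₂ : s₂ = (h ^ 2 +
        (s₁ ^ 2 + (3 * t₁ - 2 * S₁) * s₁ + 3 * t₁ ^ 2 - 3 * t₁ * S₁ + S₁ ^ 2) * h +
        (s₁ + t₁) * (t₁ - S₁) *
          (s₁ ^ 2 + (t₁ - S₁) * s₁ + t₁ ^ 2 - t₁ * S₁ + S₁ ^ 2)) /
      (2 * h + 3 * (s₁ + t₁) * (t₁ - S₁)))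
    (ht₂ : t₂ = (-h ^ 2 + (s₁ ^ 2 + s₁ * S₁ + S₁ ^ 2) * h +
        (s₁ + t₁) * (t₁ - S₁) *
          (s₁ ^ 2 + (t₁ - S₁) * s₁ + t₁ ^ 2 - t₁ * S₁ + S₁ ^ 2)) /
      (2 * h + 3 * (s₁ + t₁) * (t₁ - S₁))) :
    s₂ ^ 2 - t₂ ^ 2 - (s₁ ^ 2 + s₁ * S₁ + S₁ ^ 2) * s₂ +
      (s₁ ^ 2 - 2 * s₁ * S₁ + S₁ ^ 2 + 3 * s₁ * t₁ - 3 * t₁ * S₁ + 3 * t₁ ^ 2) * t₂ +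
      (s₁ + t₁) * (S₁ - t₁) *
        (s₁ ^ 2 - s₁ * S₁ + S₁ ^ 2 + s₁ * t₁ - t₁ * S₁ + t₁ ^ 2) = 0 := by
  subst hs₂ ht₂
  have hden' : h * 2 + 3 * (s₁ + t₁) * (t₁ - S₁) ≠ 0 := by rwa [mul_comm h 2]
  field_simp; ring
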